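/- Let N be a positive integer, let c = (c_1, …, c_N) ∈ ℝ^N and W ∈ ℝ^P be shared parameters, and for models γ ∈ {α, β} with α ≠ β let f_γ(x; c, W) = N^{-1/2} Σ_{i=1}^N c_i u_{γ i} φ(v_{γ i} h_i(x; W)), where each h_i(·; W): ℝ^d → ℝ is differentiable in W, φ: ℝ → ℝ is differentiable, (v_{γ i}) are random modulations, and the two families (u_{α i})_i and (u_{β i})_i are integrable, centered (E[u_{γ i}] = 0), mutually independent, and independent of all other random variables. Assume all appearing products are integrable. Then for all inputs x, x', the expectation over initialization of the shared-parameter NTK vanishes: E[ ∇_{(c,W)} f_α(x) · ∇_{(c,W)} f_β(x') ] = 0, where ∇_{(c,W)} denotes the gradient with respect to all shared parameters (c_1,…,c_N, W). -/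

import Mathlib

open MeasureTheory ProbabilityTheory
open scoped RealInnerProductSpace


lemma my_integral_mul_eq_zero_of_indep {Ω : Type*} [mΩ : MeasurableSpace Ω] (P : Measure Ω)
    [IsProbabilityMeasure P] {X R : Ω → ℝ} {mX mR : MeasurableSpace Ω}
    (hindep : Indep mX mR P) (hmX : mX ≤ mΩ) (hmR : mR ≤ mΩ)
    (hX : Measurable[mX] X) (hR : Measurable[mR] R)
    (hX0 : ∫ ω, X ω ∂P = 0) :
    ∫ ω, X ω * R ω ∂P = 0 := by
  have hXR : IndepFun X R P := by
    rw [IndepFun_iff_Indep]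
    exact indep_of_indep_of_le_left (indep_of_indep_of_le_right hindep hR.comap_le) hX.comap_le
  rw [show (fun ω => X ω * R ω) = X * R from rfl, hXR.integral_mul_eq_mul_integral
    (hX.mono hmX le_rfl).aestronglyMeasurable
    (hR.mono hmR le_rfl).aestronglyMeasurable, hX0, zero_mul]

lemma my_sum_swap {n m : ℕ} (A B : Fin n → ℝ) (D E : Fin n → Fin m → ℝ) (s : ℝ) :
    (∑ q, (s * ∑ i, A i * D i q) * (s * ∑ i, B i * E i q))
      = ∑ i, ∑ i', ((s * s) * (∑ q, D i q * E i' q)) * (A i * B i') := by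
  calc ∑ q, (s * ∑ i, A i * D i q) * (s * ∑ i, B i * E i q)
      = ∑ q, ∑ i, ∑ i', (s * (A i * D i q)) * (s * (B i' * E i' q)) := by
        refine Finset.sum_congr rfl fun q _ => ?_
        rw [Finset.mul_sum, Finset.mul_sum, Finset.sum_mul_sum]
    _ = ∑ i, ∑ i', ∑ q, (s * (A i * D i q)) * (s * (B i' * E i' q)) := by
        rw [Finset.sum_comm]
        exact Finset.sum_congr rfl fun i _ => Finset.sum_comm
    _ = ∑ i, ∑ i', ((s * s) * (∑ q, D i q * E i' q)) * (A i * B i') := by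
        refine Finset.sum_congr rfl fun i _ => Finset.sum_congr rfl fun i' _ => ?_
        rw [Finset.sum_congr rfl (fun q _ => show
          (s * (A i * D i q)) * (s * (B i' * E i' q))
            = ((s * s) * (A i * B i')) * (D i q * E i' q) from by ring), ← Finset.mul_sum]
        ring
open scoped RealInnerProductSpace

noncomputable def myprojR (N Pdim : ℕ) :
    EuclideanSpace ℝ ((Fin N) ⊕ (Fin Pdim)) →L[ℝ] EuclideanSpace ℝ (Fin Pdim) :=
  LinearMap.toContinuousLinearMap
    { toFun := fun θ => WithLp.toLp 2 (fun p => θ (Sum.inr p))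
      map_add' := fun _ _ => rfl
      map_smul' := fun _ _ => rfl }

@[simp] lemma myprojR_apply (N Pdim : ℕ) (θ : EuclideanSpace ℝ ((Fin N) ⊕ (Fin Pdim)))
    (p : Fin Pdim) : myprojR N Pdim θ p = θ (Sum.inr p) := rfl

lemma my_grad_model {N Pdim d : ℕ}
    (c : EuclideanSpace ℝ (Fin N)) (W : EuclideanSpace ℝ (Fin Pdim))
    (θ₀ : EuclideanSpace ℝ ((Fin N) ⊕ (Fin Pdim)))
    (hθ₀l : ∀ i, θ₀ (Sum.inl i) = c i) (hθ₀r : ∀ p, θ₀ (Sum.inr p) = W p)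
    (h : Fin N → EuclideanSpace ℝ (Fin d) → EuclideanSpace ℝ (Fin Pdim) → ℝ)
    (hh : ∀ i x, Differentiable ℝ (h i x))
    (φ : ℝ → ℝ) (hφ : Differentiable ℝ φ)
    (a b : Fin N → ℝ) (s : ℝ) (x : EuclideanSpace ℝ (Fin d)) :
    (∀ j, gradient (fun θ => s * ∑ i, θ (Sum.inl i) * a i
        * φ (b i * h i x (WithLp.toLp 2 (fun p => θ (Sum.inr p))))) θ₀ (Sum.inl j)
      = s * (a j * φ (b j * h j x W)))
    ∧ (∀ q, gradient (fun θ => s * ∑ i, θ (Sum.inl i) * a i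
        * φ (b i * h i x (WithLp.toLp 2 (fun p => θ (Sum.inr p))))) θ₀ (Sum.inr q)
      = s * ∑ i, c i * a i * b i * deriv φ (b i * h i x W)
          * fderiv ℝ (h i x) W (EuclideanSpace.single q 1)) := by
  classical
  set π := myprojR N Pdim with hπ
  have hWfun : WithLp.toLp 2 (fun p => θ₀ (Sum.inr p)) = W := by ext p; exact hθ₀r p
  have hπθ₀ : π θ₀ = W := hWfun
  set L : EuclideanSpace ℝ ((Fin N) ⊕ (Fin Pdim)) →L[ℝ] ℝ :=
    s • ∑ i, ((θ₀ (Sum.inl i) * a i) •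
        ((deriv φ (b i * h i x W)) • ((b i) • ((fderiv ℝ (h i x) W).comp π)))
      + (φ (b i * h i x W)) •
        ((a i) • (EuclideanSpace.proj (Sum.inl i) :
          EuclideanSpace ℝ ((Fin N) ⊕ (Fin Pdim)) →L[ℝ] ℝ))) with hL
  have key : HasFDerivAt (fun θ : EuclideanSpace ℝ ((Fin N) ⊕ (Fin Pdim)) =>
      s * ∑ i, θ (Sum.inl i) * a i * φ (b i * h i x (WithLp.toLp 2 (fun p => θ (Sum.inr p))))) L θ₀ := by
    rw [hL]
    apply HasFDerivAt.const_mul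
    apply HasFDerivAt.fun_sum
    intro i _
    have hg1 : HasFDerivAt (fun θ : EuclideanSpace ℝ ((Fin N) ⊕ (Fin Pdim)) =>
        θ (Sum.inl i) * a i) ((a i) • (EuclideanSpace.proj (Sum.inl i) :
          EuclideanSpace ℝ ((Fin N) ⊕ (Fin Pdim)) →L[ℝ] ℝ)) θ₀ :=
      (EuclideanSpace.proj (Sum.inl i) :
        EuclideanSpace ℝ ((Fin N) ⊕ (Fin Pdim)) →L[ℝ] ℝ).hasFDerivAt.mul_const (a i)
    have hinner : HasFDerivAt (fun θ : EuclideanSpace ℝ ((Fin N) ⊕ (Fin Pdim)) =>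
        b i * h i x (WithLp.toLp 2 (fun p => θ (Sum.inr p))))
        ((b i) • ((fderiv ℝ (h i x) W).comp π)) θ₀ := by
      have hW' : HasFDerivAt (h i x) (fderiv ℝ (h i x) W) (π θ₀) :=
        hπθ₀ ▸ ((hh i x) W).hasFDerivAt
      exact (hW'.comp θ₀ (π.hasFDerivAt (x := θ₀))).const_mul (b i)
    have hg2 : HasFDerivAt (fun θ : EuclideanSpace ℝ ((Fin N) ⊕ (Fin Pdim)) =>
        φ (b i * h i x (WithLp.toLp 2 (fun p => θ (Sum.inr p)))))
        ((deriv φ (b i * h i x W)) • ((b i) • ((fderiv ℝ (h i x) W).comp π))) θ₀ := by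
      have := ((hφ _).hasDerivAt).comp_hasFDerivAt θ₀ hinner
      rwa [hWfun] at this
    have := hg1.mul hg2
    rwa [hWfun] at this
  have hgk : ∀ k, gradient (fun θ : EuclideanSpace ℝ ((Fin N) ⊕ (Fin Pdim)) =>
      s * ∑ i, θ (Sum.inl i) * a i * φ (b i * h i x (WithLp.toLp 2 (fun p => θ (Sum.inr p))))) θ₀ k
      = L (EuclideanSpace.single k 1) := by
    intro k
    have hg := key.hasGradientAt.gradient
    rw [hg]
    have h2 := InnerProductSpace.toDual_symm_apply (𝕜 := ℝ) (y := L)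
      (x := EuclideanSpace.single k 1)
    rw [EuclideanSpace.inner_single_right] at h2
    simpa using h2
  constructor
  · intro j
    rw [hgk]
    have hπ0 : π (EuclideanSpace.single (Sum.inl j) (1:ℝ)) = 0 := by
      ext p; simp [hπ, EuclideanSpace.single_apply]
    simp only [hL, ContinuousLinearMap.smul_apply, ContinuousLinearMap.coe_sum',
      Finset.sum_apply, ContinuousLinearMap.add_apply, ContinuousLinearMap.coe_comp',
      Function.comp_apply, hπ0, map_zero, smul_eq_mul, mul_zero, zero_add,
      PiLp.proj_apply, EuclideanSpace.single_apply, Sum.inl.injEq]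
    rw [Finset.sum_congr rfl (fun i _ => show
      φ (b i * h i x W) * (a i * if i = j then (1:ℝ) else 0)
        = if i = j then a i * φ (b i * h i x W) else 0 from by split <;> ring)]
    rw [Finset.sum_ite_eq' Finset.univ j (fun i => a i * φ (b i * h i x W))]
    simp
  · intro q
    rw [hgk]
    have hπq : π (EuclideanSpace.single (Sum.inr q) (1:ℝ)) = EuclideanSpace.single q 1 := by
      ext p; simp [hπ, EuclideanSpace.single_apply]
    simp only [hL, ContinuousLinearMap.smul_apply, ContinuousLinearMap.coe_sum',
      Finset.sum_apply, ContinuousLinearMap.add_apply, ContinuousLinearMap.coe_comp',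
      Function.comp_apply, hπq, smul_eq_mul, PiLp.proj_apply,
      EuclideanSpace.single_apply, reduceCtorEq, if_false, mul_zero, add_zero]
    congr 1
    refine Finset.sum_congr rfl (fun i _ => ?_)
    rw [hθ₀l]
    ring

/-- **Vanishing expected shared-parameter NTK between distinct models
(Statement 5, Theorem 2 part 2).**
With shared parameters `θ = (c, W) ∈ ℝ^N × ℝ^P` and model outputs
`f_γ(x; θ) = N^{-1/2} ∑ᵢ θ_{c,i} u_{γ i} φ(v_{γ i} h_i(x; θ_W))`, where the last-layer
post-activation modulation families `(u_{α i})` and `(u_{β i})` are integrable, centered,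
mutually independent and independent of everything else, the expectation over initialization
of the shared-parameter NTK between the two models vanishes:
`E[⟪∇_θ f_α(x), ∇_θ f_β(x')⟫] = 0`. -/
theorem expected_common_NTK_vanishes_between_models
    {Ω : Type*} [MeasurableSpace Ω] (P : Measure Ω) [IsProbabilityMeasure P]
    (N Pdim d : ℕ) (hN : 0 < N)
    -- shared parameters: last-layer weights `c` and remaining weights `W`, bundled as `θ₀`
    (c : EuclideanSpace ℝ (Fin N)) (W : EuclideanSpace ℝ (Fin Pdim))
    (θ₀ : EuclideanSpace ℝ ((Fin N) ⊕ (Fin Pdim)))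
    (hθ₀l : ∀ i, θ₀ (Sum.inl i) = c i) (hθ₀r : ∀ p, θ₀ (Sum.inr p) = W p)
    -- previous layers `h_i(x; W)`, differentiable in `W`
    (h : Fin N → EuclideanSpace ℝ (Fin d) → EuclideanSpace ℝ (Fin Pdim) → ℝ)
    (hh : ∀ i x, Differentiable ℝ (h i x))
    -- differentiable activation
    (φ : ℝ → ℝ) (hφ : Differentiable ℝ φ)
    -- random modulations
    (uα uβ vα vβ : Fin N → Ω → ℝ)
    (huαm : ∀ i, Measurable (uα i)) (huβm : ∀ i, Measurable (uβ i))
    (hvαm : ∀ i, Measurable (vα i)) (hvβm : ∀ i, Measurable (vβ i))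
    -- the `u_{α i}` and `u_{β i}` are integrable and centered
    (huαint : ∀ i, Integrable (uα i) P) (huβint : ∀ i, Integrable (uβ i) P)
    (huα0 : ∀ i, ∫ ω, uα i ω ∂P = 0) (huβ0 : ∀ i, ∫ ω, uβ i ω ∂P = 0)
    -- the family `(u_{α i})`, the family `(u_{β i})` and all other random variables form
    -- three mutually independent blocks
    (hindep : iIndep
      ![⨆ i, MeasurableSpace.comap (uα i) inferInstance,
        ⨆ i, MeasurableSpace.comap (uβ i) inferInstance,
        (⨆ i, MeasurableSpace.comap (vα i) inferInstance) ⊔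
        (⨆ i, MeasurableSpace.comap (vβ i) inferInstance)] P)
    -- the model outputs as functions of the shared parameters `θ`
    (fα fβ : EuclideanSpace ℝ (Fin d) → Ω → EuclideanSpace ℝ ((Fin N) ⊕ (Fin Pdim)) → ℝ)
    (hfα : ∀ x ω θ, fα x ω θ
      = (1 / Real.sqrt N) * ∑ i, θ (Sum.inl i) * uα i ω
          * φ (vα i ω * h i x (WithLp.toLp 2 (fun p => θ (Sum.inr p)))))
    (hfβ : ∀ x ω θ, fβ x ω θ
      = (1 / Real.sqrt N) * ∑ i, θ (Sum.inl i) * uβ i ω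
          * φ (vβ i ω * h i x (WithLp.toLp 2 (fun p => θ (Sum.inr p)))))
    -- all appearing products are integrable
    (hNTKint : ∀ x x',
      Integrable (fun ω => ⟪gradient (fα x ω) θ₀, gradient (fβ x' ω) θ₀⟫) P)
    (hint₁ : ∀ (x x' : EuclideanSpace ℝ (Fin d)) (i i' : Fin N),
      Integrable (fun ω =>
        uα i ω * uβ i' ω * φ (vα i ω * h i x W) * φ (vβ i' ω * h i' x' W)) P)
    (hint₂ : ∀ (x x' : EuclideanSpace ℝ (Fin d)) (i i' : Fin N),
      Integrable (fun ω =>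
        uα i ω * uβ i' ω * vα i ω * vβ i' ω
          * deriv φ (vα i ω * h i x W) * deriv φ (vβ i' ω * h i' x' W)) P) :
    ∀ x x' : EuclideanSpace ℝ (Fin d),
      ∫ ω, ⟪gradient (fα x ω) θ₀, gradient (fβ x' ω) θ₀⟫ ∂P = 0 := by
  intro x x'
  classical
  set s : ℝ := 1 / Real.sqrt N with hs
  -- σ-algebra blocks (do NOT introduce them as local hypotheses: a local hypothesis of
  -- class type would hijack instance resolution)
  have hm0le : (⨆ i, MeasurableSpace.comap (uα i) inferInstance) ≤ (inferInstance : MeasurableSpace Ω) := iSup_le fun i => (huαm i).comap_le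
  have hm1le : (⨆ i, MeasurableSpace.comap (uβ i) inferInstance) ≤ (inferInstance : MeasurableSpace Ω) := iSup_le fun i => (huβm i).comap_le
  have hm2le : ((⨆ i, MeasurableSpace.comap (vα i) inferInstance) ⊔ (⨆ i, MeasurableSpace.comap (vβ i) inferInstance)) ≤ (inferInstance : MeasurableSpace Ω) := sup_le
    (iSup_le fun i => (hvαm i).comap_le) (iSup_le fun i => (hvβm i).comap_le)
  have hle : ∀ k : Fin 3, (![⨆ i, MeasurableSpace.comap (uα i) inferInstance,
        ⨆ i, MeasurableSpace.comap (uβ i) inferInstance,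
        (⨆ i, MeasurableSpace.comap (vα i) inferInstance) ⊔
        (⨆ i, MeasurableSpace.comap (vβ i) inferInstance)] k) ≤ (inferInstance : MeasurableSpace Ω) := by
    intro k
    fin_cases k
    · exact hm0le
    · exact hm1le
    · exact hm2le
  have hI : Indep (⨆ i, MeasurableSpace.comap (uα i) inferInstance)
      ((⨆ i, MeasurableSpace.comap (uβ i) inferInstance) ⊔
        ((⨆ i, MeasurableSpace.comap (vα i) inferInstance) ⊔
         (⨆ i, MeasurableSpace.comap (vβ i) inferInstance))) P := by
    have hd : Disjoint ({0} : Set (Fin 3)) ({1, 2} : Set (Fin 3)) := by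
      simp [Set.disjoint_left]
    have h2 := indep_iSup_of_disjoint hle hindep hd
    rw [show ({1, 2} : Set (Fin 3)) = insert 1 {2} from rfl, iSup_insert, iSup_singleton,
      iSup_singleton] at h2
    exact h2
  -- measurability w.r.t. the blocks
  have hmuα : ∀ i, Measurable[⨆ i, MeasurableSpace.comap (uα i) inferInstance] (uα i) :=
    fun i =>
    (Measurable.of_comap_le le_rfl).mono
      (le_iSup (fun i => MeasurableSpace.comap (uα i) inferInstance) i) le_rfl
  have hmuβ : ∀ i, Measurable[(⨆ i, MeasurableSpace.comap (uβ i) inferInstance) ⊔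
      ((⨆ i, MeasurableSpace.comap (vα i) inferInstance) ⊔
       (⨆ i, MeasurableSpace.comap (vβ i) inferInstance))] (uβ i) :=
    fun i =>
    (Measurable.of_comap_le le_rfl).mono
      (le_trans (le_iSup (fun i => MeasurableSpace.comap (uβ i) inferInstance) i) le_sup_left)
      le_rfl
  have hmvα : ∀ i, Measurable[(⨆ i, MeasurableSpace.comap (uβ i) inferInstance) ⊔
      ((⨆ i, MeasurableSpace.comap (vα i) inferInstance) ⊔
       (⨆ i, MeasurableSpace.comap (vβ i) inferInstance))] (vα i) :=
    fun i =>
    (Measurable.of_comap_le le_rfl).mono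
      (le_trans (le_trans (le_iSup (fun i => MeasurableSpace.comap (vα i) inferInstance) i)
        le_sup_left) le_sup_right) le_rfl
  have hmvβ : ∀ i, Measurable[(⨆ i, MeasurableSpace.comap (uβ i) inferInstance) ⊔
      ((⨆ i, MeasurableSpace.comap (vα i) inferInstance) ⊔
       (⨆ i, MeasurableSpace.comap (vβ i) inferInstance))] (vβ i) :=
    fun i =>
    (Measurable.of_comap_le le_rfl).mono
      (le_trans (le_trans (le_iSup (fun i => MeasurableSpace.comap (vβ i) inferInstance) i)
        le_sup_right) le_sup_right) le_rfl
  have hφm : Measurable φ := hφ.continuous.measurable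
  have hφ'm : Measurable (deriv φ) := measurable_deriv φ
  -- the two families of vanishing integrals
  have key1 : ∀ i i' : Fin N,
      ∫ ω, uα i ω * uβ i' ω * φ (vα i ω * h i x W) * φ (vβ i' ω * h i' x' W) ∂P = 0 := by
    intro i i'
    rw [show (fun ω => uα i ω * uβ i' ω * φ (vα i ω * h i x W) * φ (vβ i' ω * h i' x' W))
        = fun ω => uα i ω *
          (uβ i' ω * φ (vα i ω * h i x W) * φ (vβ i' ω * h i' x' W)) from
      funext fun ω => by ring]
    exact my_integral_mul_eq_zero_of_indep P hI hm0le (sup_le hm1le hm2le) (hmuα i)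
      (((hmuβ i').mul (hφm.comp ((hmvα i).mul_const _))).mul
        (hφm.comp ((hmvβ i').mul_const _))) (huα0 i)
  have key2 : ∀ i i' : Fin N,
      ∫ ω, uα i ω * uβ i' ω * vα i ω * vβ i' ω
        * deriv φ (vα i ω * h i x W) * deriv φ (vβ i' ω * h i' x' W) ∂P = 0 := by
    intro i i'
    rw [show (fun ω => uα i ω * uβ i' ω * vα i ω * vβ i' ω
          * deriv φ (vα i ω * h i x W) * deriv φ (vβ i' ω * h i' x' W))
        = fun ω => uα i ω * (uβ i' ω * vα i ω * vβ i' ω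
          * deriv φ (vα i ω * h i x W) * deriv φ (vβ i' ω * h i' x' W)) from
      funext fun ω => by ring]
    exact my_integral_mul_eq_zero_of_indep P hI hm0le (sup_le hm1le hm2le) (hmuα i)
      (((((hmuβ i').mul (hmvα i)).mul (hmvβ i')).mul
        (hφ'm.comp ((hmvα i).mul_const _))).mul
        (hφ'm.comp ((hmvβ i').mul_const _))) (huα0 i)
  -- gradient components
  have hcompα : ∀ ω,
      (∀ j, gradient (fα x ω) θ₀ (Sum.inl j) = s * (uα j ω * φ (vα j ω * h j x W)))
      ∧ (∀ q, gradient (fα x ω) θ₀ (Sum.inr q)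
          = s * ∑ i, c i * uα i ω * vα i ω * deriv φ (vα i ω * h i x W)
              * fderiv ℝ (h i x) W (EuclideanSpace.single q 1)) := by
    intro ω
    have hfe : fα x ω = (fun θ => s * ∑ i, θ (Sum.inl i) * uα i ω
        * φ (vα i ω * h i x (WithLp.toLp 2 (fun p => θ (Sum.inr p))))) := funext fun θ => hfα x ω θ
    rw [hfe]
    exact my_grad_model c W θ₀ hθ₀l hθ₀r h hh φ hφ _ _ s x
  have hcompβ : ∀ ω,
      (∀ j, gradient (fβ x' ω) θ₀ (Sum.inl j) = s * (uβ j ω * φ (vβ j ω * h j x' W)))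
      ∧ (∀ q, gradient (fβ x' ω) θ₀ (Sum.inr q)
          = s * ∑ i, c i * uβ i ω * vβ i ω * deriv φ (vβ i ω * h i x' W)
              * fderiv ℝ (h i x') W (EuclideanSpace.single q 1)) := by
    intro ω
    have hfe : fβ x' ω = (fun θ => s * ∑ i, θ (Sum.inl i) * uβ i ω
        * φ (vβ i ω * h i x' (WithLp.toLp 2 (fun p => θ (Sum.inr p))))) := funext fun θ => hfβ x' ω θ
    rw [hfe]
    exact my_grad_model c W θ₀ hθ₀l hθ₀r h hh φ hφ _ _ s x'
  -- pointwise expansion of the NTK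
  have hpt : ∀ ω, (⟪gradient (fα x ω) θ₀, gradient (fβ x' ω) θ₀⟫ : ℝ)
      = (∑ j, (s * s)
          * (uα j ω * uβ j ω * φ (vα j ω * h j x W) * φ (vβ j ω * h j x' W)))
        + ∑ i, ∑ i', ((s * s) * (∑ q, fderiv ℝ (h i x) W (EuclideanSpace.single q 1)
              * fderiv ℝ (h i' x') W (EuclideanSpace.single q 1)) * (c i * c i'))
            * (uα i ω * uβ i' ω * vα i ω * vβ i' ω * deriv φ (vα i ω * h i x W)
               * deriv φ (vβ i' ω * h i' x' W)) := by
    intro ω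
    obtain ⟨hαl, hαr⟩ := hcompα ω
    obtain ⟨hβl, hβr⟩ := hcompβ ω
    rw [show (⟪gradient (fα x ω) θ₀, gradient (fβ x' ω) θ₀⟫ : ℝ)
        = ∑ k, gradient (fα x ω) θ₀ k * gradient (fβ x' ω) θ₀ k from by
      simp only [PiLp.inner_apply, RCLike.inner_apply', conj_trivial]]
    rw [Fintype.sum_sum_type]
    congr 1
    · exact Finset.sum_congr rfl fun j _ => by rw [hαl j, hβl j]; ring
    · rw [Finset.sum_congr rfl (fun q _ => by rw [hαr q, hβr q])]
      rw [my_sum_swap (fun i => c i * uα i ω * vα i ω * deriv φ (vα i ω * h i x W))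
        (fun i => c i * uβ i ω * vβ i ω * deriv φ (vβ i ω * h i x' W))
        (fun i q => fderiv ℝ (h i x) W (EuclideanSpace.single q 1))
        (fun i q => fderiv ℝ (h i x') W (EuclideanSpace.single q 1)) s]
      exact Finset.sum_congr rfl fun i _ => Finset.sum_congr rfl fun i' _ => by ring
  -- integrate
  rw [integral_congr_ae (Filter.Eventually.of_forall hpt)]
  have hInt1 : Integrable (fun ω => ∑ j, (s * s)
      * (uα j ω * uβ j ω * φ (vα j ω * h j x W) * φ (vβ j ω * h j x' W))) P :=
    integrable_finset_sum _ fun j _ => (hint₁ x x' j j).const_mul (s * s)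
  have hInt2 : Integrable (fun ω => ∑ i, ∑ i',
      ((s * s) * (∑ q, fderiv ℝ (h i x) W (EuclideanSpace.single q 1)
          * fderiv ℝ (h i' x') W (EuclideanSpace.single q 1)) * (c i * c i'))
        * (uα i ω * uβ i' ω * vα i ω * vβ i' ω * deriv φ (vα i ω * h i x W)
           * deriv φ (vβ i' ω * h i' x' W))) P :=
    integrable_finset_sum _ fun i _ => integrable_finset_sum _ fun i' _ =>
      (hint₂ x x' i i').const_mul _
  rw [integral_add hInt1 hInt2,
    integral_finset_sum _ (fun j _ => (hint₁ x x' j j).const_mul (s * s)),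
    integral_finset_sum _ (fun i _ => integrable_finset_sum _ fun i' _ =>
      (hint₂ x x' i i').const_mul _)]
  have e1 : ∀ j : Fin N, ∫ ω, (s * s)
      * (uα j ω * uβ j ω * φ (vα j ω * h j x W) * φ (vβ j ω * h j x' W)) ∂P = 0 := by
    intro j
    rw [integral_const_mul, key1 j j, mul_zero]
  have e2 : ∀ i i' : Fin N, ∫ ω,
      ((s * s) * (∑ q, fderiv ℝ (h i x) W (EuclideanSpace.single q 1)
          * fderiv ℝ (h i' x') W (EuclideanSpace.single q 1)) * (c i * c i'))
        * (uα i ω * uβ i' ω * vα i ω * vβ i' ω * deriv φ (vα i ω * h i x W)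
           * deriv φ (vβ i' ω * h i' x' W)) ∂P = 0 := by
    intro i i'
    rw [integral_const_mul, key2 i i', mul_zero]
  have hsum1 : (∑ j, ∫ ω, s * s
      * (uα j ω * uβ j ω * φ (vα j ω * h j x W) * φ (vβ j ω * h j x' W)) ∂P) = 0 :=
    Finset.sum_eq_zero fun j _ => e1 j
  have hsum2 : (∑ i, ∫ ω, ∑ i',
      ((s * s) * (∑ q, fderiv ℝ (h i x) W (EuclideanSpace.single q 1)
          * fderiv ℝ (h i' x') W (EuclideanSpace.single q 1)) * (c i * c i'))
        * (uα i ω * uβ i' ω * vα i ω * vβ i' ω * deriv φ (vα i ω * h i x W)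
           * deriv φ (vβ i' ω * h i' x' W)) ∂P) = 0 :=
    Finset.sum_eq_zero fun i _ => by
      rw [integral_finset_sum _ (fun i' _ => (hint₂ x x' i i').const_mul _)]
      exact Finset.sum_eq_zero fun i' _ => e2 i i'
  rw [hsum1, hsum2, add_zero]
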